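/- Let r > 0, α ∈ ℝ with sin(πα/2) ≠ 0, and x₀ ∈ ℝ. Write u(f) = √r·∑_{k∈ℤ} (𝓕^α f)(rk) for the pairing of 𝓕^α Ш_r against a Schwartz function f, and say that u is even (respectively odd) about x₀ if u(x ↦ f(2x₀ − x)) = u(f) (respectively = −u(f)) for every Schwartz function f. Then u is even or odd about x₀ if and only if there exist integers m, n with 2·x₀·cos(πα/2) = r·m and 2·x₀·sin(πα/2) = n/r; and when such m, n exist, u is even about x₀ if m·n is even, and odd about x₀ if m·n is odd. -/

import Mathlib

open MeasureTheory

/-- The fractional Fourier transform of a function `f : ℝ → ℂ`, for `α` with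
`sin (πα/2) ≠ 0`. -/
noncomputable def frFT (α : ℝ) (f : ℝ → ℂ) (x : ℝ) : ℂ :=
  (Complex.I * (Real.sin (Real.pi * α / 2) : ℂ)) ^ (-(1/2) : ℂ) *
    ∫ y : ℝ, Complex.exp ((Real.pi : ℂ) * Complex.I / (Real.sin (Real.pi * α / 2) : ℂ) *
      ((Real.cos (Real.pi * α / 2) * (x ^ 2 + y ^ 2) - 2 * x * y : ℝ) : ℂ)) * f y

/-- The pairing `⟨𝓕^α Ш_r, f⟩ = √r · ∑_{k ∈ ℤ} (𝓕^α f)(rk)`. -/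
noncomputable def frftCombPair (r α : ℝ) (f : ℝ → ℂ) : ℂ :=
  (Real.sqrt r : ℂ) * ∑' k : ℤ, frFT α f (r * k)

open Complex FourierTransform in
lemma frFT_reflect (α x₀ : ℝ) (hs : Real.sin (Real.pi * α / 2) ≠ 0) (f : ℝ → ℂ) (x : ℝ) :
    frFT α (fun y => f (2 * x₀ - y)) x =
      Complex.exp ((Real.pi : ℂ) * Complex.I * (4 * Real.sin (Real.pi * α / 2) * x₀ *
        (Real.cos (Real.pi * α / 2) * x₀ - x))) *
      frFT α f (2 * Real.cos (Real.pi * α / 2) * x₀ - x) := by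
  set s := Real.sin (Real.pi * α / 2) with hsdef
  set c := Real.cos (Real.pi * α / 2) with hcdef
  have hs' : (s : ℂ) ≠ 0 := by exact_mod_cast hs
  have hc : (c : ℂ) ^ 2 = 1 - (s : ℂ) ^ 2 := by
    have : s ^ 2 + c ^ 2 = 1 := Real.sin_sq_add_cos_sq _
    have : (s:ℂ) ^ 2 + (c:ℂ) ^ 2 = 1 := by exact_mod_cast this
    linear_combination this
  unfold frFT
  rw [← integral_sub_left_eq_self
    (fun y => Complex.exp ((Real.pi : ℂ) * Complex.I / (s : ℂ) *
      ((c * (x ^ 2 + y ^ 2) - 2 * x * y : ℝ) : ℂ)) * f (2 * x₀ - y)) volume (2 * x₀)]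
  have key : ∀ y : ℝ,
      Complex.exp ((Real.pi : ℂ) * Complex.I / (s : ℂ) *
        ((c * (x ^ 2 + (2 * x₀ - y) ^ 2) - 2 * x * (2 * x₀ - y) : ℝ) : ℂ)) * f (2 * x₀ - (2 * x₀ - y))
      = Complex.exp ((Real.pi : ℂ) * Complex.I * (4 * s * x₀ * (c * x₀ - x))) *
        (Complex.exp ((Real.pi : ℂ) * Complex.I / (s : ℂ) *
          ((c * ((2 * c * x₀ - x) ^ 2 + y ^ 2) - 2 * (2 * c * x₀ - x) * y : ℝ) : ℂ)) * f y) := by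
    intro y
    rw [sub_sub_cancel, ← mul_assoc, ← Complex.exp_add]
    congr 2
    push_cast
    linear_combination (norm := (field_simp; ring))
      (-(4 * (Real.pi:ℂ) * Complex.I * x₀ * ((c:ℂ) * x₀ - (x:ℂ))) / (s:ℂ)) * hc
  simp only [key]
  rw [integral_const_mul]
  ring

open Complex in
lemma frftCombPair_reflect (r α x₀ : ℝ) (hr : 0 < r)
    (hs : Real.sin (Real.pi * α / 2) ≠ 0) (m n : ℤ)
    (hm : 2 * x₀ * Real.cos (Real.pi * α / 2) = r * m)
    (hn : 2 * x₀ * Real.sin (Real.pi * α / 2) = n / r) (f : ℝ → ℂ) :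
    frftCombPair r α (fun x => f (2 * x₀ - x)) = (-1 : ℂ) ^ (m * n) * frftCombPair r α f := by
  have hr0 : r ≠ 0 := ne_of_gt hr
  have hn' : 2 * x₀ * Real.sin (Real.pi * α / 2) * r = n := by
    field_simp at hn; linarith [hn]
  have key : ∀ k : ℤ, frFT α (fun x => f (2 * x₀ - x)) (r * k)
      = (-1 : ℂ) ^ (m * n) * frFT α f (r * ((m - k : ℤ) : ℝ)) := by
    intro k
    rw [frFT_reflect α x₀ hs f (r * k)]
    rw [show (2 * Real.cos (Real.pi * α / 2) * x₀ - r * (k : ℝ)) = r * ((m - k : ℤ) : ℝ) by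
      push_cast; linarith [hm]]
    congr 1
    have hreal : 4 * Real.sin (Real.pi * α / 2) * x₀ *
        (Real.cos (Real.pi * α / 2) * x₀ - r * (k : ℝ)) = (m : ℝ) * n - 2 * (n * k) := by
      linear_combination (2 * x₀ * Real.sin (Real.pi * α / 2)) * hm + ((m : ℝ) - 2 * k) * hn'
    have hrealC := congrArg (fun t : ℝ => (t : ℂ)) hreal
    push_cast at hrealC
    rw [show (Real.pi : ℂ) * Complex.I * (4 * (Real.sin (Real.pi * α / 2) : ℂ) * (x₀ : ℂ) *
        ((Real.cos (Real.pi * α / 2) : ℂ) * (x₀ : ℂ) - ((r * (k : ℝ) : ℝ) : ℂ)))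
        = ((m * n : ℤ) : ℂ) * ((Real.pi : ℂ) * Complex.I)
          + ((-(n * k) : ℤ) : ℂ) * (2 * (Real.pi : ℂ) * Complex.I) by
      push_cast
      linear_combination (Real.pi : ℂ) * Complex.I * hrealC]
    rw [Complex.exp_add, Complex.exp_int_mul, Complex.exp_int_mul_two_pi_mul_I, mul_one]
    norm_num [Complex.exp_pi_mul_I]
  unfold frftCombPair
  have htr := (Equiv.subLeft m).tsum_eq (fun k : ℤ => frFT α f (r * (k : ℝ)))
  simp only [Equiv.subLeft_apply] at htr
  rw [tsum_congr key, tsum_mul_left, htr]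
  ring

open Complex in
lemma chirp_hasDerivAt (a : ℝ) (x : ℝ) :
    HasDerivAt (fun y : ℝ => Complex.exp (Complex.I * (a : ℂ) * (y : ℂ) ^ 2))
      (Complex.I * (a : ℂ) * (2 * (x : ℂ)) * Complex.exp (Complex.I * (a : ℂ) * (x : ℂ) ^ 2)) x := by
  have h1 : HasDerivAt (fun z : ℂ => Complex.exp (Complex.I * (a : ℂ) * z ^ 2))
      (Complex.I * (a : ℂ) * (2 * (x : ℂ)) * Complex.exp (Complex.I * (a : ℂ) * (x : ℂ) ^ 2))
      (x : ℂ) := by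
    have h2 : HasDerivAt (fun z : ℂ => Complex.I * (a : ℂ) * z ^ 2)
        (Complex.I * (a : ℂ) * (2 * (x : ℂ))) (x : ℂ) := by
      simpa [mul_comm, mul_assoc, mul_left_comm] using
        ((hasDerivAt_pow 2 (x : ℂ)).const_mul (Complex.I * (a : ℂ)))
    simpa [mul_comm, mul_assoc, mul_left_comm] using h2.cexp
  exact h1.comp_ofReal

open Complex in
lemma chirp_contDiff (a : ℝ) :
    ContDiff ℝ ⊤ (fun y : ℝ => Complex.exp (Complex.I * (a : ℂ) * (y : ℂ) ^ 2)) := by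
  apply ((Complex.contDiff_exp (𝕜 := ℂ)).restrict_scalars ℝ).comp
  exact contDiff_const.mul (Complex.ofRealCLM.contDiff.pow 2)

open Complex in
lemma chirp_iteratedDeriv (a : ℝ) (n : ℕ) :
    ∃ p : Polynomial ℂ, ∀ x : ℝ, iteratedDeriv n
        (fun y : ℝ => Complex.exp (Complex.I * (a : ℂ) * (y : ℂ) ^ 2)) x
      = p.eval (x : ℂ) * Complex.exp (Complex.I * (a : ℂ) * (x : ℂ) ^ 2) := by
  induction n with
  | zero => exact ⟨1, fun x => by simp⟩
  | succ n ih =>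
    obtain ⟨p, hp⟩ := ih
    refine ⟨Polynomial.derivative p + p * (Polynomial.C (2 * Complex.I * a) * Polynomial.X),
      fun x => ?_⟩
    rw [iteratedDeriv_succ]
    have hder : deriv (iteratedDeriv n
        (fun y : ℝ => Complex.exp (Complex.I * (a : ℂ) * (y : ℂ) ^ 2))) x
        = deriv (fun y : ℝ => p.eval (y : ℂ) * Complex.exp (Complex.I * (a : ℂ) * (y : ℂ) ^ 2)) x := by
      apply Filter.EventuallyEq.deriv_eq
      exact Filter.Eventually.of_forall hp
    rw [hder]
    have h1 : HasDerivAt (fun y : ℝ => p.eval (y : ℂ))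
        (p.derivative.eval (x : ℂ)) x := (p.hasDerivAt (x : ℂ)).comp_ofReal
    have h3 := h1.mul (chirp_hasDerivAt a x)
    rw [HasDerivAt.deriv (f := fun y : ℝ => p.eval (y : ℂ) * Complex.exp (Complex.I * (a : ℂ) * (y : ℂ) ^ 2)) h3]
    simp [Polynomial.eval_mul, Polynomial.eval_add]
    ring

lemma poly_bound (p : Polynomial ℂ) :
    ∃ C, 0 ≤ C ∧ ∀ x : ℝ, ‖p.eval (x : ℂ)‖ ≤ C * (1 + ‖x‖) ^ p.natDegree := by
  refine ⟨∑ i ∈ Finset.range (p.natDegree + 1), ‖p.coeff i‖,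
    Finset.sum_nonneg fun i _ => norm_nonneg _, fun x => ?_⟩
  rw [Polynomial.eval_eq_sum_range, Finset.sum_mul]
  refine (norm_sum_le _ _).trans (Finset.sum_le_sum fun i hi => ?_)
  rw [norm_mul, norm_pow]
  have h1 : (0:ℝ) ≤ 1 + ‖x‖ := by positivity
  have h2 : ‖(x : ℂ)‖ ≤ 1 + ‖x‖ := by
    rw [Complex.norm_real]; simp [abs_le, le_abs]
  calc ‖p.coeff i‖ * ‖(x:ℂ)‖ ^ i ≤ ‖p.coeff i‖ * (1 + ‖x‖) ^ i := by
        gcongr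
    _ ≤ ‖p.coeff i‖ * (1 + ‖x‖) ^ p.natDegree := by
        gcongr
        · linarith [norm_nonneg x]
        · exact Nat.lt_succ_iff.mp (Finset.mem_range.mp hi)

open Complex in
lemma chirp_norm_one (a x : ℝ) : ‖Complex.exp (Complex.I * (a : ℂ) * (x : ℂ) ^ 2)‖ = 1 := by
  rw [Complex.norm_exp]
  have : (Complex.I * (a : ℂ) * (x : ℂ) ^ 2).re = 0 := by
    simp [Complex.mul_re, Complex.mul_im, ← Complex.ofReal_pow]
  rw [this, Real.exp_zero]

open Complex in
lemma chirp_hasTemperateGrowth (a : ℝ) :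
    Function.HasTemperateGrowth (fun y : ℝ => Complex.exp (Complex.I * (a : ℂ) * (y : ℂ) ^ 2)) := by
  refine ⟨(chirp_contDiff a).of_le le_top, fun n => ?_⟩
  obtain ⟨p, hp⟩ := chirp_iteratedDeriv a n
  obtain ⟨C, hC0, hC⟩ := poly_bound p
  refine ⟨p.natDegree, C, fun x => ?_⟩
  rw [norm_iteratedFDeriv_eq_norm_iteratedDeriv, hp x, norm_mul, chirp_norm_one, mul_one]
  exact hC x

noncomputable def toSchwartz (f : ℝ → ℂ) (hf : ContDiff ℝ ((⊤ : ℕ∞)) f)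
    (h : HasCompactSupport f) : SchwartzMap ℝ ℂ where
  toFun := f
  smooth' := hf
  decay' := by
    intro k n
    have h1 : HasCompactSupport (iteratedFDeriv ℝ n f) := h.iteratedFDeriv n
    have h2 : HasCompactSupport (fun x : ℝ => ‖x‖ ^ k * ‖iteratedFDeriv ℝ n f x‖) := by
      apply HasCompactSupport.mul_left
      exact h1.norm
    obtain ⟨C, hC⟩ := h2.exists_bound_of_continuous
      (by
        apply Continuous.mul
        · exact (continuous_norm.pow k)
        · exact (hf.continuous_iteratedFDeriv (by exact_mod_cast le_top)).norm)
    refine ⟨C, fun x => ?_⟩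
    have := hC x
    rwa [Real.norm_eq_abs, _root_.abs_of_nonneg (by positivity)] at this

lemma exists_schwartz_bump (p δ : ℝ) (hδ : 0 < δ) :
    ∃ g : SchwartzMap ℝ ℂ, g p = 1 ∧ ∀ x : ℝ, δ ≤ |x - p| → g x = 0 := by
  have hB : ∃ B : ContDiffBump p, B.rOut = δ := by
    exact ⟨⟨δ / 2, δ, by positivity, by linarith⟩, rfl⟩
  obtain ⟨B, hBr⟩ := hB
  have hsmooth : ContDiff ℝ ((⊤ : ℕ∞)) (fun x : ℝ => (B x : ℂ)) :=
    Complex.ofRealCLM.contDiff.comp B.contDiff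
  have hcs : HasCompactSupport (fun x : ℝ => (B x : ℂ)) := by
    exact HasCompactSupport.comp_left (g := fun t : ℝ => (t : ℂ)) B.hasCompactSupport
      Complex.ofReal_zero
  refine ⟨toSchwartz _ hsmooth hcs, ?_, ?_⟩
  · show ((B p : ℝ) : ℂ) = 1
    rw [B.one_of_mem_closedBall]
    · norm_num
    · simp [Metric.mem_closedBall]
      exact le_of_lt B.rIn_pos
  · intro x hx
    show ((B x : ℝ) : ℂ) = 0
    have : B x = 0 := by
      apply B.zero_of_le_dist
      rw [hBr, Real.dist_eq]
      exact hx
    rw [this]; norm_num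

open Complex FourierTransform in
lemma frFT_surj (α : ℝ) (hs : Real.sin (Real.pi * α / 2) ≠ 0) (g : SchwartzMap ℝ ℂ) :
    ∃ f : SchwartzMap ℝ ℂ, ∀ x : ℝ, frFT α (⇑f) x = g x := by
  set s := Real.sin (Real.pi * α / 2) with hsdef
  set c := Real.cos (Real.pi * α / 2) with hcdef
  have hs' : (s : ℂ) ≠ 0 := by exact_mod_cast hs
  have hCne : (Complex.I * (s : ℂ)) ^ (-(1/2) : ℂ) ≠ 0 := by
    rw [Complex.cpow_def_of_ne_zero (mul_ne_zero Complex.I_ne_zero hs')]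
    exact Complex.exp_ne_zero _
  have hscale_tg : Function.HasTemperateGrowth (fun x : ℝ => s * x) := by
    have := (s • ContinuousLinearMap.id ℝ ℝ).hasTemperateGrowth
    convert this using 1
    ext x
    simp
  have hscale_up : ∃ (k : ℕ) (C : ℝ), ∀ x : ℝ, ‖x‖ ≤ C * (1 + ‖s * x‖) ^ k := by
    refine ⟨1, |s|⁻¹, fun x => ?_⟩
    rw [pow_one, Real.norm_eq_abs, Real.norm_eq_abs, abs_mul]
    have h0 : 0 < |s| := abs_pos.mpr hs
    rw [mul_add, mul_one]
    have : |s|⁻¹ * (|s| * |x|) = |x| := by field_simp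
    nlinarith [inv_nonneg.mpr (le_of_lt h0), abs_nonneg x]
  set C : ℂ := (Complex.I * (s : ℂ)) ^ (-(1/2) : ℂ) with hCdef
  set h : SchwartzMap ℝ ℂ := C⁻¹ • (SchwartzMap.bilinLeftCLM (ContinuousLinearMap.mul ℝ ℂ)
      (chirp_hasTemperateGrowth (-(Real.pi * c * s)))
      (SchwartzMap.compCLM ℝ hscale_tg hscale_up g)) with hhdef
  set w : SchwartzMap ℝ ℂ := (SchwartzMap.fourierTransformCLE ℝ (SchwartzMap ℝ ℂ)).symm h with hwdef
  set f : SchwartzMap ℝ ℂ := SchwartzMap.bilinLeftCLM (ContinuousLinearMap.mul ℝ ℂ)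
      (chirp_hasTemperateGrowth (-(Real.pi * c / s))) w with hfdef
  refine ⟨f, fun x => ?_⟩
  have hfval : ∀ y : ℝ, f y = w y * Complex.exp (Complex.I * ((-(Real.pi * c / s) : ℝ) : ℂ) * (y:ℂ)^2) := fun y => rfl
  have hhval : ∀ ξ : ℝ, h ξ = C⁻¹ * (g (s * ξ) * Complex.exp (Complex.I * ((-(Real.pi * c * s) : ℝ) : ℂ) * (ξ:ℂ)^2)) := fun ξ => rfl
  have hkey : ∀ y : ℝ,
      Complex.exp ((Real.pi : ℂ) * Complex.I / (s : ℂ) * ((c * (x ^ 2 + y ^ 2) - 2 * x * y : ℝ) : ℂ)) * f y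
      = Complex.exp ((Real.pi : ℂ) * Complex.I * (c : ℂ) * (x : ℂ)^2 / (s : ℂ)) *
          (Complex.exp (((-2 * Real.pi * (y * (x / s)) : ℝ) : ℂ) * Complex.I) * w y) := by
    intro y
    rw [hfval y]
    have hE : Complex.exp ((Real.pi : ℂ) * Complex.I / (s : ℂ) * ((c * (x ^ 2 + y ^ 2) - 2 * x * y : ℝ) : ℂ)) *
        Complex.exp (Complex.I * ((-(Real.pi * c / s) : ℝ) : ℂ) * (y:ℂ)^2)
        = Complex.exp ((Real.pi : ℂ) * Complex.I * (c : ℂ) * (x : ℂ)^2 / (s : ℂ)) *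
          Complex.exp (((-2 * Real.pi * (y * (x / s)) : ℝ) : ℂ) * Complex.I) := by
      rw [← Complex.exp_add, ← Complex.exp_add]
      congr 1
      push_cast
      field_simp
      ring
    linear_combination (w y) * hE
  unfold frFT
  rw [← hsdef, ← hcdef, ← hCdef]
  calc C * ∫ y : ℝ, Complex.exp ((Real.pi : ℂ) * Complex.I / (s : ℂ) *
        ((c * (x ^ 2 + y ^ 2) - 2 * x * y : ℝ) : ℂ)) * f y
      = C * ∫ y : ℝ, Complex.exp ((Real.pi : ℂ) * Complex.I * (c : ℂ) * (x : ℂ)^2 / (s : ℂ)) *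
          (Complex.exp (((-2 * Real.pi * (y * (x / s)) : ℝ) : ℂ) * Complex.I) * w y) := by
        rw [integral_congr_ae (Filter.Eventually.of_forall hkey)]
    _ = C * (Complex.exp ((Real.pi : ℂ) * Complex.I * (c : ℂ) * (x : ℂ)^2 / (s : ℂ)) *
          ∫ y : ℝ, Complex.exp (((-2 * Real.pi * (y * (x / s)) : ℝ) : ℂ) * Complex.I) * w y) := by
        rw [integral_const_mul]
    _ = C * (Complex.exp ((Real.pi : ℂ) * Complex.I * (c : ℂ) * (x : ℂ)^2 / (s : ℂ)) * h (x / s)) := by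
        congr 1
        congr 1
        have hFI := Real.fourier_real_eq_integral_exp_smul (⇑w) (x / s)
        simp only [smul_eq_mul] at hFI
        have : 𝓕 (⇑w) (x / s) = h (x / s) := by
          have h2 : SchwartzMap.fourierTransformCLE ℝ (SchwartzMap ℝ ℂ) w = h :=
            (SchwartzMap.fourierTransformCLE ℝ (SchwartzMap ℝ ℂ)).apply_symm_apply h
          rw [← h2]
          rfl
        rw [← this, hFI]
        congr 1
        ext y
        push_cast
        ring
    _ = g x := by
        rw [hhval (x / s)]
        have hx : s * (x / s) = x := by field_simp
        rw [hx]
        have : Complex.exp ((Real.pi : ℂ) * Complex.I * (c : ℂ) * (x : ℂ)^2 / (s : ℂ)) *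
            Complex.exp (Complex.I * ((-(Real.pi * c * s) : ℝ) : ℂ) * ((x / s : ℝ) : ℂ)^2) = 1 := by
          rw [← Complex.exp_add, ← Complex.exp_zero]
          congr 1
          push_cast
          field_simp
          ring
        have hCC : C * C⁻¹ = 1 := mul_inv_cancel₀ hCne
        linear_combination (g x * C * C⁻¹) * this + (g x) * hCC

/-- Parity of `𝓕^α Ш_r` about a point `x₀`: it is even or odd about `x₀` iff
`2x₀cos(πα/2) = rm` and `2x₀sin(πα/2) = n/r` for integers `m, n`; even when `mn` is even
and odd when `mn` is odd. -/
theorem stmt15 (r α x₀ : ℝ) (hr : 0 < r) (hsin : Real.sin (Real.pi * α / 2) ≠ 0) :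
    (((∀ f : SchwartzMap ℝ ℂ,
          frftCombPair r α (fun x => f (2 * x₀ - x)) = frftCombPair r α (⇑f)) ∨
       (∀ f : SchwartzMap ℝ ℂ,
          frftCombPair r α (fun x => f (2 * x₀ - x)) = -frftCombPair r α (⇑f)))
      ↔ (∃ m n : ℤ, 2 * x₀ * Real.cos (Real.pi * α / 2) = r * m ∧
          2 * x₀ * Real.sin (Real.pi * α / 2) = n / r)) ∧
    (∀ m n : ℤ, 2 * x₀ * Real.cos (Real.pi * α / 2) = r * m →
        2 * x₀ * Real.sin (Real.pi * α / 2) = n / r →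
      (Even (m * n) → ∀ f : SchwartzMap ℝ ℂ,
          frftCombPair r α (fun x => f (2 * x₀ - x)) = frftCombPair r α (⇑f)) ∧
      (Odd (m * n) → ∀ f : SchwartzMap ℝ ℂ,
          frftCombPair r α (fun x => f (2 * x₀ - x)) = -frftCombPair r α (⇑f))) := by
  have hr0 : r ≠ 0 := ne_of_gt hr
  constructor
  · constructor
    · -- hard direction
      intro H
      obtain ⟨ε, hεpm, hH⟩ : ∃ ε : ℂ, (ε = 1 ∨ ε = -1) ∧ ∀ f : SchwartzMap ℝ ℂ,
          frftCombPair r α (fun x => f (2 * x₀ - x)) = ε * frftCombPair r α (⇑f) := by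
        rcases H with H | H
        · exact ⟨1, Or.inl rfl, fun f => by rw [H f, one_mul]⟩
        · exact ⟨-1, Or.inr rfl, fun f => by rw [H f]; ring⟩
      have hε0 : ε ≠ 0 := by rcases hεpm with h | h <;> simp [h]
      have hsr : ((Real.sqrt r : ℝ) : ℂ) ≠ 0 := by
        simp only [ne_eq, Complex.ofReal_eq_zero]
        exact Real.sqrt_ne_zero'.mpr hr
      have test : ∀ g : SchwartzMap ℝ ℂ,
          (∑' k : ℤ, Complex.exp ((Real.pi : ℂ) * Complex.I *
              (4 * (Real.sin (Real.pi * α / 2) : ℂ) * (x₀ : ℂ) *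
              ((Real.cos (Real.pi * α / 2) : ℂ) * (x₀ : ℂ) - ((r * (k : ℝ) : ℝ) : ℂ)))) *
            g (2 * Real.cos (Real.pi * α / 2) * x₀ - r * (k : ℝ)))
          = ε * ∑' k : ℤ, g (r * (k : ℝ)) := by
        intro g
        obtain ⟨f, hf⟩ := frFT_surj α hsin g
        have h1 := hH f
        unfold frftCombPair at h1
        rw [tsum_congr (fun k : ℤ => frFT_reflect α x₀ hsin (⇑f) (r * (k : ℝ)))] at h1
        simp only [hf] at h1
        rw [show ε * ((Real.sqrt r : ℂ) * ∑' k : ℤ, g (r * (k : ℝ)))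
            = (Real.sqrt r : ℂ) * (ε * ∑' k : ℤ, g (r * (k : ℝ))) by ring] at h1
        exact mul_left_cancel₀ hsr h1
      -- Step 1: existence of m
      have hm_ex : ∃ m : ℤ, 2 * x₀ * Real.cos (Real.pi * α / 2) = r * m := by
        by_contra hcon
        push_neg at hcon
        set t := 2 * x₀ * Real.cos (Real.pi * α / 2) / r with htdef
        have hft : Int.fract t ≠ 0 := by
          intro h0
          have h1 : t - ⌊t⌋ = 0 := by rwa [Int.self_sub_floor]
          refine hcon ⌊t⌋ ?_
          have : t = (⌊t⌋ : ℝ) := by linarith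
          have h5 : t * r = 2 * x₀ * Real.cos (Real.pi * α / 2) := by
            rw [htdef, div_mul_cancel₀ _ hr0]
          rw [this] at h5
          linarith
        have h01 : 0 < Int.fract t := lt_of_le_of_ne (Int.fract_nonneg t) (Ne.symm hft)
        have h02 : Int.fract t < 1 := Int.fract_lt_one t
        set δ := r * min (Int.fract t) (1 - Int.fract t) with hδdef
        have hδpos : 0 < δ := mul_pos hr (lt_min h01 (by linarith))
        have hδr : δ ≤ r := by
          rw [hδdef]
          nlinarith [min_le_left (Int.fract t) (1 - Int.fract t)]
        obtain ⟨g, hg1, hg0⟩ := exists_schwartz_bump 0 δ hδpos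
        have ht := test g
        have hR : (∑' k : ℤ, g (r * (k : ℝ))) = 1 := by
          rw [tsum_eq_single 0 ?_]
          · simpa using hg1
          · intro k hk
            apply hg0
            have h1k : (1 : ℝ) ≤ |(k : ℝ)| := by exact_mod_cast Int.one_le_abs hk
            rw [sub_zero, abs_mul, abs_of_pos hr]
            calc δ ≤ r := hδr
              _ = r * 1 := by ring
              _ ≤ r * |(k : ℝ)| := by gcongr
        have hL : ∀ k : ℤ, g (2 * Real.cos (Real.pi * α / 2) * x₀ - r * (k : ℝ)) = 0 := by
          intro k
          apply hg0
          rw [sub_zero]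
          have heq : 2 * Real.cos (Real.pi * α / 2) * x₀ - r * (k : ℝ) = r * (t - k) := by
            rw [htdef]; field_simp
          rw [heq, abs_mul, abs_of_pos hr]
          have hmin : min (Int.fract t) (1 - Int.fract t) ≤ |t - k| := by
            rcases le_or_gt (k : ℝ) (⌊t⌋ : ℝ) with hk | hk
            · have h3 : Int.fract t ≤ t - k := by
                have := Int.self_sub_floor t
                linarith
              calc min (Int.fract t) (1 - Int.fract t) ≤ Int.fract t := min_le_left _ _
                _ ≤ t - k := h3
                _ ≤ |t - k| := le_abs_self _
            · have hk' : (⌊t⌋ : ℤ) < k := by exact_mod_cast hk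
              have hk1 : (⌊t⌋ : ℝ) + 1 ≤ k := by exact_mod_cast hk'
              have h3 : 1 - Int.fract t ≤ k - t := by
                have := Int.self_sub_floor t
                linarith
              calc min (Int.fract t) (1 - Int.fract t) ≤ 1 - Int.fract t := min_le_right _ _
                _ ≤ k - t := h3
                _ ≤ |t - k| := by rw [abs_sub_comm]; exact le_abs_self _
          rw [hδdef]
          gcongr
        rw [hR, tsum_congr (fun k : ℤ => by rw [hL k, mul_zero]), tsum_zero] at ht
        simp only [mul_one] at ht
        exact hε0 ht.symm
      obtain ⟨m, hm⟩ := hm_ex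
      -- Step 2: existence of n
      have hΘ : ∀ j : ℤ, Complex.exp ((Real.pi : ℂ) * Complex.I *
          (4 * (Real.sin (Real.pi * α / 2) : ℂ) * (x₀ : ℂ) *
          ((Real.cos (Real.pi * α / 2) : ℂ) * (x₀ : ℂ) - ((r * ((m - j : ℤ) : ℝ) : ℝ) : ℂ)))) = ε := by
        intro j
        obtain ⟨g, hg1, hg0⟩ := exists_schwartz_bump (r * (j : ℝ)) r hr
        have ht := test g
        have hpt : ∀ k : ℤ, 2 * Real.cos (Real.pi * α / 2) * x₀ - r * (k : ℝ)
            = r * ((m - k : ℤ) : ℝ) := by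
          intro k; push_cast; linarith [hm]
        simp only [hpt] at ht
        have hgz : ∀ k : ℤ, k ≠ j → g (r * (k : ℝ)) = 0 := by
          intro k hk
          apply hg0
          have h1k : (1 : ℝ) ≤ |((k - j : ℤ) : ℝ)| := by
            exact_mod_cast Int.one_le_abs (sub_ne_zero.mpr hk)
          have : r * (k : ℝ) - r * (j : ℝ) = r * ((k - j : ℤ) : ℝ) := by push_cast; ring
          rw [this, abs_mul, abs_of_pos hr]
          nlinarith
        have hRs : (∑' k : ℤ, g (r * (k : ℝ))) = 1 := by
          rw [tsum_eq_single j (fun k hk => hgz k hk)]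
          exact hg1
        have hLs : (∑' k : ℤ, Complex.exp ((Real.pi : ℂ) * Complex.I *
            (4 * (Real.sin (Real.pi * α / 2) : ℂ) * (x₀ : ℂ) *
            ((Real.cos (Real.pi * α / 2) : ℂ) * (x₀ : ℂ) - ((r * (k : ℝ) : ℝ) : ℂ)))) *
            g (r * ((m - k : ℤ) : ℝ)))
            = Complex.exp ((Real.pi : ℂ) * Complex.I *
            (4 * (Real.sin (Real.pi * α / 2) : ℂ) * (x₀ : ℂ) *
            ((Real.cos (Real.pi * α / 2) : ℂ) * (x₀ : ℂ) - ((r * ((m - j : ℤ) : ℝ) : ℝ) : ℂ)))) := by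
          rw [tsum_eq_single (m - j) ?_]
          · rw [show m - (m - j) = j by ring, hg1, mul_one]
          · intro k hk
            rw [hgz (m - k) (fun hc => hk (by omega)), mul_zero]
        rw [hLs, hRs, mul_one] at ht
        exact ht
      have he1 := (hΘ m).trans (hΘ (m - 1)).symm
      rw [Complex.exp_eq_exp_iff_exists_int] at he1
      obtain ⟨n, hn⟩ := he1
      refine ⟨m, n, hm, ?_⟩
      have h2 : ((4 * Real.pi * Real.sin (Real.pi * α / 2) * x₀ * r : ℝ) : ℂ) * Complex.I
          = ((2 * Real.pi * n : ℝ) : ℂ) * Complex.I := by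
        push_cast at hn ⊢
        linear_combination hn
      have h3 : (4 * Real.pi * Real.sin (Real.pi * α / 2) * x₀ * r : ℝ) = (2 * Real.pi * n : ℝ) := by
        have := mul_right_cancel₀ Complex.I_ne_zero h2
        exact_mod_cast this
      have h2π : (2 * Real.pi : ℝ) ≠ 0 := by positivity
      have h4 : 2 * Real.pi * (2 * x₀ * Real.sin (Real.pi * α / 2) * r) = 2 * Real.pi * (n : ℝ) := by
        linear_combination h3
      have h5 : 2 * x₀ * Real.sin (Real.pi * α / 2) * r = (n : ℝ) := mul_left_cancel₀ h2π h4
      rw [eq_div_iff hr0]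
      linarith
    · rintro ⟨m, n, hm, hn⟩
      rcases Int.even_or_odd (m * n) with he | ho
      · left; intro f
        rw [frftCombPair_reflect r α x₀ hr hsin m n hm hn (⇑f), Even.neg_one_zpow he, one_mul]
      · right; intro f
        rw [frftCombPair_reflect r α x₀ hr hsin m n hm hn (⇑f), Odd.neg_one_zpow ho, neg_one_mul]
  · intro m n hm hn
    constructor
    · intro he f
      rw [frftCombPair_reflect r α x₀ hr hsin m n hm hn (⇑f), Even.neg_one_zpow he, one_mul]
    · intro ho f
      rw [frftCombPair_reflect r α x₀ hr hsin m n hm hn (⇑f), Odd.neg_one_zpow ho, neg_one_mul]
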